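/- Let S = ⟨n_1, n_2, n_3⟩ be a 3-generated numerical semigroup with exactly three Betti elements. Then S is bland, i.e., LD(S) = 1/max Δ(S). -/

import Mathlib

open Finset

namespace LengthDensity

/-- The set of factorizations of `n` with respect to generators `g`. -/
def facs {k : ℕ} (g : Fin k → ℕ) (n : ℕ) : Set (Fin k → ℕ) :=
  {z | ∑ i, z i * g i = n}

/-- Membership in the numerical semigroup generated by `g`. -/
def mem {k : ℕ} (g : Fin k → ℕ) (n : ℕ) : Prop := (facs g n).Nonempty

/-- The set of factorization lengths of `n`. -/
def lengthSet {k : ℕ} (g : Fin k → ℕ) (n : ℕ) : Set ℕ :=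
  (fun z => ∑ i, z i) '' facs g n

/-- Length density of an element. -/
noncomputable def LD {k : ℕ} (g : Fin k → ℕ) (n : ℕ) : ℝ :=
  (((lengthSet g n).ncard : ℝ) - 1) /
    (((sSup (lengthSet g n) : ℕ) : ℝ) - ((sInf (lengthSet g n) : ℕ) : ℝ))

/-- Length density of the semigroup: infimum of `LD` over elements with
non-singleton length set. -/
noncomputable def LDsgp {k : ℕ} (g : Fin k → ℕ) : ℝ :=
  sInf {x : ℝ | ∃ n : ℕ, 2 ≤ (lengthSet g n).ncard ∧ x = LD g n}

/-- The delta set (successive gaps) of a set of naturals. -/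
def deltaOf (L : Set ℕ) : Set ℕ :=
  {d | ∃ a ∈ L, ∃ b ∈ L, a < b ∧ (∀ c ∈ L, ¬(a < c ∧ c < b)) ∧ d = b - a}

/-- The delta set of an element. -/
def delta {k : ℕ} (g : Fin k → ℕ) (n : ℕ) : Set ℕ := deltaOf (lengthSet g n)

/-- The delta set of the semigroup. -/
def Delta {k : ℕ} (g : Fin k → ℕ) : Set ℕ := ⋃ n : ℕ, delta g n

/-- Adjacency in the factorization graph of `n`: two factorizations of `n`
sharing a positive coordinate. -/
def adj {k : ℕ} (g : Fin k → ℕ) (n : ℕ) (z z' : Fin k → ℕ) : Prop :=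
  z ∈ facs g n ∧ z' ∈ facs g n ∧ ∃ i, 0 < z i ∧ 0 < z' i

/-- `n` is a Betti element: its factorization graph is disconnected. -/
def IsBetti {k : ℕ} (g : Fin k → ℕ) (n : ℕ) : Prop :=
  ∃ z ∈ facs g n, ∃ z' ∈ facs g n, ¬ Relation.ReflTransGen (adj g n) z z'

/-- The semigroup is tasty: `LD(S) > 1 / max Δ(S)`. -/
def Tasty {k : ℕ} (g : Fin k → ℕ) : Prop := LDsgp g > 1 / ((sSup (Delta g) : ℕ) : ℝ)

/-- The semigroup is bland: `LD(S) = 1 / max Δ(S)`. -/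
def Bland {k : ℕ} (g : Fin k → ℕ) : Prop := LDsgp g = 1 / ((sSup (Delta g) : ℕ) : ℝ)

/-- `g` is a minimal generating set: no generator is a nonnegative integer
combination of the others. -/
def IsMinGen {k : ℕ} (g : Fin k → ℕ) : Prop :=
  ∀ i, ¬ ∃ z : Fin k → ℕ, z i = 0 ∧ ∑ j, z j * g j = g i

/-- `n` is a non-atom of the semigroup generated by `g`:
it is a sum of two nonzero elements. -/
def NonAtom {k : ℕ} (g : Fin k → ℕ) (n : ℕ) : Prop :=
  ∃ a b : ℕ, 0 < a ∧ 0 < b ∧ mem g a ∧ mem g b ∧ n = a + b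

/-! ### Auxiliary development -/

/-- A "pure" factorization supported at one coordinate. -/
def pureF (i : Fin 3) (t : ℕ) : Fin 3 → ℕ := fun k => if k = i then t else 0

@[simp] lemma pureF_same (i : Fin 3) (t : ℕ) : pureF i t i = t := by simp [pureF]

lemma pureF_other {i k : Fin 3} (h : k ≠ i) (t : ℕ) : pureF i t k = 0 := by
  simp [pureF, h]

lemma third : ∀ i j : Fin 3, i ≠ j →
    ∃ l, l ≠ i ∧ l ≠ j ∧ ∀ k, k = i ∨ k = j ∨ k = l := by decide

lemma exists_ne (i : Fin 3) : ∃ j : Fin 3, j ≠ i := by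
  fin_cases i
  exacts [⟨1, by decide⟩, ⟨0, by decide⟩, ⟨0, by decide⟩]

lemma sum3 (f : Fin 3 → ℕ) {i j l : Fin 3} (hij : i ≠ j) (hil : i ≠ l) (hjl : j ≠ l)
    (hall : ∀ k, k = i ∨ k = j ∨ k = l) : ∑ k, f k = f i + f j + f l := by
  have huniv : (Finset.univ : Finset (Fin 3)) = {i, j, l} := by
    ext k
    simp only [Finset.mem_univ, Finset.mem_insert, Finset.mem_singleton, true_iff]
    exact hall k
  rw [huniv, Finset.sum_insert (by simp [hij, hil]),
    Finset.sum_insert (by simp [hjl]), Finset.sum_singleton]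
  ring

section Gen

variable (g : Fin 3 → ℕ)

lemma mem_facs {z : Fin 3 → ℕ} {n : ℕ} : z ∈ facs g n ↔ ∑ k, z k * g k = n := Iff.rfl

lemma weight_pureF (i : Fin 3) (t : ℕ) : ∑ k, pureF i t k * g k = t * g i := by
  rw [Finset.sum_eq_single i]
  · simp
  · intro b _ hb; simp [pureF_other hb]
  · simp

lemma length_pureF (i : Fin 3) (t : ℕ) : ∑ k, pureF i t k = t := by
  rw [Finset.sum_eq_single i]
  · simp
  · intro b _ hb; simp [pureF_other hb]
  · simp

/-- Defining set for the minimal pure multiple. -/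
def cset (i : Fin 3) : Set ℕ :=
  {t | 0 < t ∧ ∃ w : Fin 3 → ℕ, (∑ k, w k * g k = t * g i) ∧ w i = 0}

/-- Minimal positive `t` with `t * g i` factorizable without coordinate `i`. -/
noncomputable def cc (i : Fin 3) : ℕ := sInf (cset g i)

open Classical in
/-- A chosen factorization of `cc g i * g i` avoiding coordinate `i`. -/
noncomputable def wch (i : Fin 3) : Fin 3 → ℕ :=
  if h : ∃ w : Fin 3 → ℕ, (∑ k, w k * g k = cc g i * g i) ∧ w i = 0 then h.choose else 0

lemma cset_nonempty (hpos : ∀ i, 0 < g i) (i : Fin 3) : (cset g i).Nonempty := by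
  obtain ⟨j, hj⟩ := exists_ne i
  exact ⟨g j, hpos j, pureF j (g i), by rw [weight_pureF]; ring, pureF_other (Ne.symm hj) _⟩

lemma cc_mem (hpos : ∀ i, 0 < g i) (i : Fin 3) : cc g i ∈ cset g i := Nat.sInf_mem (cset_nonempty g hpos i)

lemma cc_pos (hpos : ∀ i, 0 < g i) (i : Fin 3) : 0 < cc g i := (cc_mem g hpos i).1

lemma wch_spec (hpos : ∀ i, 0 < g i) (i : Fin 3) :
    (∑ k, wch g i k * g k = cc g i * g i) ∧ wch g i i = 0 := by
  have h := (cc_mem g hpos i).2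
  rw [wch, dif_pos h]
  exact h.choose_spec

lemma wch_facs (hpos : ∀ i, 0 < g i) (i : Fin 3) : wch g i ∈ facs g (cc g i * g i) := (wch_spec g hpos i).1

lemma wch_zero (hpos : ∀ i, 0 < g i) (i : Fin 3) : wch g i i = 0 := (wch_spec g hpos i).2

lemma wch_pos_coord (hpos : ∀ i, 0 < g i) (i : Fin 3) : ∃ k, k ≠ i ∧ 0 < wch g i k := by
  by_contra h
  push_neg at h
  have hz : ∀ k, wch g i k = 0 := by
    intro k
    by_cases hk : k = i
    · rw [hk]; exact wch_zero g hpos i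
    · exact Nat.le_zero.mp (h k hk)
  have := (wch_spec g hpos i).1
  rw [Finset.sum_eq_zero (fun k _ => by rw [hz k, zero_mul])] at this
  have : 0 < cc g i * g i := Nat.mul_pos (cc_pos g hpos i) (hpos i)
  omega

lemma facs_zero_coords (hpos : ∀ i, 0 < g i) {z : Fin 3 → ℕ} (hz : z ∈ facs g 0) : z = 0 := by
  rw [mem_facs] at hz
  funext k
  have h := (Finset.sum_eq_zero_iff.mp hz) k (Finset.mem_univ k)
  have hk := hpos k
  simp only [Pi.zero_apply]
  rcases Nat.mul_eq_zero.mp h with h | h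
  · exact h
  · omega

lemma coord_le {z : Fin 3 → ℕ} {n : ℕ} (hz : z ∈ facs g n) (k : Fin 3) :
    z k * g k ≤ n := by
  rw [mem_facs] at hz
  rw [← hz]
  exact Finset.single_le_sum (f := fun m => z m * g m) (fun m _ => Nat.zero_le _)
    (Finset.mem_univ k)

/-- Any factorization of `cc g i * g i` using coordinate `i` is the pure one. -/
lemma eq_pure_of_pos (hpos : ∀ i, 0 < g i) {i : Fin 3} {u : Fin 3 → ℕ}
    (hu : u ∈ facs g (cc g i * g i)) (hui : 0 < u i) : u = pureF i (cc g i) := by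
  have hile : u i ≤ cc g i := by
    have h := coord_le g hu i
    exact Nat.le_of_mul_le_mul_right h (hpos i)
  rcases eq_or_lt_of_le hile with heq | hlt
  · -- u i = cc g i ; all other coordinates vanish
    have hsum := mem_facs g |>.mp hu
    have hsplit : u i * g i + ∑ k ∈ Finset.univ.erase i, u k * g k = ∑ k, u k * g k :=
      Finset.add_sum_erase _ (fun k => u k * g k) (Finset.mem_univ i)
    have huig : u i * g i = cc g i * g i := by rw [heq]
    have hrest : ∑ k ∈ Finset.univ.erase i, u k * g k = 0 := by omega
    funext k
    by_cases hk : k = i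
    · rw [hk, pureF_same, heq]
    · have h0 := Finset.sum_eq_zero_iff.mp hrest k (by simp [hk])
      have := hpos k
      rw [pureF_other hk]
      rcases Nat.mul_eq_zero.mp h0 with h | h
      · exact h
      · omega
  · -- u i < cc g i gives a smaller element of cset, contradiction
    exfalso
    set t' := cc g i - u i with ht'
    have ht'pos : 0 < t' := by omega
    have hw : (fun k => if k = i then 0 else u k) ∈ facs g (t' * g i) := by
      rw [mem_facs]
      have hsplit : u i * g i + ∑ k ∈ Finset.univ.erase i, u k * g k = ∑ k, u k * g k :=
        Finset.add_sum_erase _ (fun k => u k * g k) (Finset.mem_univ i)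
      have hsplit2 : (if (i : Fin 3) = i then 0 else u i) * g i
          + ∑ k ∈ Finset.univ.erase i, (if k = i then 0 else u k) * g k
          = ∑ k, (if k = i then 0 else u k) * g k :=
        Finset.add_sum_erase _ (fun k => (if k = i then 0 else u k) * g k) (Finset.mem_univ i)
      have hagree : ∑ k ∈ Finset.univ.erase i, (if k = i then 0 else u k) * g k
          = ∑ k ∈ Finset.univ.erase i, u k * g k := by
        apply Finset.sum_congr rfl
        intro k hk
        rw [if_neg (Finset.ne_of_mem_erase hk)]
      have hsum := mem_facs g |>.mp hu
      have hts : t' * g i + u i * g i = cc g i * g i := by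
        rw [ht', ← Nat.add_mul]
        congr 1
        omega
      rw [if_pos rfl, zero_mul, zero_add] at hsplit2
      omega
    have : cc g i ≤ t' := Nat.sInf_le ⟨ht'pos, _, mem_facs g |>.mp hw, if_pos rfl⟩
    omega

lemma isBetti_b (hpos : ∀ i, 0 < g i) (i : Fin 3) : IsBetti g (cc g i * g i) := by
  have hpure : pureF i (cc g i) ∈ facs g (cc g i * g i) := weight_pureF g i (cc g i)
  refine ⟨pureF i (cc g i), hpure, wch g i, wch_facs g hpos i, ?_⟩
  intro hpath
  have hfix : ∀ x, Relation.ReflTransGen (adj g (cc g i * g i)) (pureF i (cc g i)) x →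
      x = pureF i (cc g i) := by
    intro x hx
    induction hx with
    | refl => rfl
    | tail h1 h2 ih =>
      rename_i b c
      rw [ih] at h2
      obtain ⟨_, hc, k, hk1, hk2⟩ := h2
      have hki : k = i := by
        by_contra hki
        rw [pureF_other hki] at hk1
        omega
      rw [hki] at hk2
      exact eq_pure_of_pos g hpos hc hk2
  have hwp := hfix _ hpath
  have h0 := wch_zero g hpos i
  have hcp := cc_pos g hpos i
  rw [hwp] at h0
  simp only [pureF_same] at h0
  omega

/-- Elementary trade step (at a Betti element). -/
def Step (u v : Fin 3 → ℕ) : Prop :=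
  ∃ (t : Fin 3) (z₀ w : Fin 3 → ℕ), (∑ k, w k * g k = cc g t * g t) ∧ w t = 0 ∧
    u = z₀ + pureF t (cc g t) ∧ v = z₀ + w

def Sym (u v : Fin 3 → ℕ) : Prop := Step g u v ∨ Step g v u

def Chain : (Fin 3 → ℕ) → (Fin 3 → ℕ) → Prop := Relation.ReflTransGen (Sym g)

lemma sum_add_weights (a b : Fin 3 → ℕ) :
    ∑ k, (a + b) k * g k = (∑ k, a k * g k) + ∑ k, b k * g k := by
  rw [← Finset.sum_add_distrib]
  apply Finset.sum_congr rfl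
  intro k _
  simp [add_mul]

lemma step_weight {u v : Fin 3 → ℕ} (h : Step g u v) :
    ∑ k, u k * g k = ∑ k, v k * g k := by
  obtain ⟨t, z₀, w, hw, _, hu, hv⟩ := h
  rw [hu, hv, sum_add_weights, sum_add_weights, weight_pureF, hw]

lemma sym_weight {u v : Fin 3 → ℕ} (h : Sym g u v) :
    ∑ k, u k * g k = ∑ k, v k * g k := by
  rcases h with h | h
  · exact step_weight g h
  · exact (step_weight g h).symm

lemma chain_weight {u v : Fin 3 → ℕ} (h : Chain g u v) :
    ∑ k, u k * g k = ∑ k, v k * g k := by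
  induction h with
  | refl => rfl
  | tail h1 h2 ih => rw [ih, sym_weight g h2]

lemma chain_symm {u v : Fin 3 → ℕ} (h : Chain g u v) : Chain g v u := by
  induction h with
  | refl => exact Relation.ReflTransGen.refl
  | tail h1 h2 ih =>
    exact Relation.ReflTransGen.trans (Relation.ReflTransGen.single (Or.symm h2)) ih

lemma step_add {u v : Fin 3 → ℕ} (e : Fin 3 → ℕ) (h : Step g u v) :
    Step g (u + e) (v + e) := by
  obtain ⟨t, z₀, w, hw, hwt, hu, hv⟩ := h
  exact ⟨t, z₀ + e, w, hw, hwt, by rw [hu]; abel, by rw [hv]; abel⟩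

lemma chain_add {u v : Fin 3 → ℕ} (e : Fin 3 → ℕ) (h : Chain g u v) :
    Chain g (u + e) (v + e) := by
  refine Relation.ReflTransGen.lift (p := Sym g) (fun x => x + e) (fun a b hab => ?_) _ _ h
  rcases hab with hab | hab
  · exact Or.inl (step_add g e hab)
  · exact Or.inr (step_add g e hab)

/-- If two factorizations of `n` share a positive coordinate, they are chain-connected
(using the inductive hypothesis for smaller values). -/
lemma help (hpos : ∀ i, 0 < g i) {n : ℕ}
    (IH : ∀ m, m < n → ∀ z z' : Fin 3 → ℕ, z ∈ facs g m → z' ∈ facs g m → Chain g z z')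
    {z z' : Fin 3 → ℕ} (hz : z ∈ facs g n) (hz' : z' ∈ facs g n) {k : Fin 3}
    (h1 : 0 < z k) (h2 : 0 < z' k) : Chain g z z' := by
  have hgk := hpos k
  have hkn : g k ≤ n := by
    have := coord_le g hz k
    have : g k ≤ z k * g k := Nat.le_mul_of_pos_left _ h1
    omega
  have hsub : ∀ (u : Fin 3 → ℕ), 0 < u k → u ∈ facs g n →
      ((u - pureF k 1) ∈ facs g (n - g k) ∧ (u - pureF k 1) + pureF k 1 = u) := by
    intro u hu hun
    have heq : (u - pureF k 1) + pureF k 1 = u := by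
      funext m
      by_cases hm : m = k
      · subst hm
        simp only [Pi.add_apply, Pi.sub_apply, pureF_same]
        omega
      · simp only [Pi.add_apply, Pi.sub_apply, pureF_other hm]
        omega
    constructor
    · rw [mem_facs]
      have := sum_add_weights g (u - pureF k 1) (pureF k 1)
      rw [heq] at this
      rw [mem_facs] at hun
      rw [weight_pureF] at this
      omega
    · exact heq
  obtain ⟨hm1, he1⟩ := hsub z h1 hz
  obtain ⟨hm2, he2⟩ := hsub z' h2 hz'
  have hlt : n - g k < n := by omega
  have hch := IH _ hlt _ _ hm1 hm2
  have := chain_add g (pureF k 1) hch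
  rwa [he1, he2] at this

lemma disj (hpos : ∀ i, 0 < g i) {n : ℕ}
    (IH : ∀ m, m < n → ∀ z z' : Fin 3 → ℕ, z ∈ facs g m → z' ∈ facs g m → Chain g z z')
    {i : Fin 3} {t : ℕ} (ht : 0 < t)
    (hz : pureF i t ∈ facs g n) {z' : Fin 3 → ℕ} (hz' : z' ∈ facs g n)
    (hz'i : z' i = 0) : Chain g (pureF i t) z' := by
  have hgi := hpos i
  have hnt : t * g i = n := by rw [← weight_pureF g i t]; exact hz
  have hnpos : 0 < n := by
    have := Nat.mul_pos ht hgi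
    omega
  have hci : cc g i ≤ t := Nat.sInf_le ⟨ht, z', by rw [mem_facs] at hz'; omega, hz'i⟩
  have hwspec := wch_spec g hpos i
  obtain ⟨j, hji, hwj⟩ := wch_pos_coord g hpos i
  set c := cc g i with hc
  set w := wch g i with hw
  set z₁ : Fin 3 → ℕ := pureF i (t - c) + w with hz₁def
  have happ₁ : ∀ k, z₁ k = pureF i (t - c) k + w k := fun k => rfl
  have hz₁ : z₁ ∈ facs g n := by
    rw [mem_facs, hz₁def, sum_add_weights, weight_pureF, hwspec.1, ← Nat.add_mul]
    have : t - c + c = t := by omega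
    rw [this, hnt]
  have hpuresplit : pureF i t = pureF i (t - c) + pureF i c := by
    funext k
    by_cases hk : k = i
    · subst hk
      simp only [Pi.add_apply, pureF_same]
      omega
    · simp only [Pi.add_apply, pureF_other hk]
  have hstep1 : Step g (pureF i t) z₁ :=
    ⟨i, pureF i (t - c), w, hwspec.1, hwspec.2, hpuresplit, rfl⟩
  by_cases hsh1 : ∃ k, 0 < z₁ k ∧ 0 < z' k
  · obtain ⟨k, hk1, hk2⟩ := hsh1
    exact Relation.ReflTransGen.head (Or.inl hstep1) (help g hpos IH hz₁ hz' hk1 hk2)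
  push_neg at hsh1
  have hz₁j : 0 < z₁ j := by
    have h := happ₁ j
    rw [pureF_other hji] at h
    omega
  have hz'j : z' j = 0 := by have := hsh1 j hz₁j; omega
  obtain ⟨l, hli, hlj, hall⟩ := third i j (Ne.symm hji)
  have hz'eq : z' = pureF l (z' l) := by
    funext k
    rcases hall k with hk | hk | hk <;> rw [hk]
    · rw [hz'i, pureF_other (Ne.symm hli)]
    · rw [hz'j, pureF_other (Ne.symm hlj)]
    · rw [pureF_same]
  have hu : 0 < z' l := by
    rcases Nat.eq_zero_or_pos (z' l) with h0 | h
    · exfalso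
      rw [mem_facs, hz'eq, weight_pureF, h0, zero_mul] at hz'
      omega
    · exact h
  have hz₁l : z₁ l = 0 := by
    by_contra hne
    have := hsh1 l (by omega)
    omega
  have hwl : w l = 0 := by
    have h := happ₁ l
    rw [pureF_other hli] at h
    omega
  have hnu : z' l * g l = n := by
    rw [← weight_pureF g l (z' l), ← hz'eq]
    exact hz'
  have hcl : cc g l ≤ z' l := Nat.sInf_le ⟨hu, z₁, by rw [mem_facs] at hz₁; omega, hz₁l⟩
  have hvspec := wch_spec g hpos l
  obtain ⟨k₂, hk₂l, hvk₂⟩ := wch_pos_coord g hpos l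
  set v := wch g l with hv
  set z'₁ : Fin 3 → ℕ := pureF l (z' l - cc g l) + v with hz'₁def
  have happ₂ : ∀ k, z'₁ k = pureF l (z' l - cc g l) k + v k := fun k => rfl
  have hz'₁ : z'₁ ∈ facs g n := by
    rw [mem_facs, hz'₁def, sum_add_weights, weight_pureF, hvspec.1, ← Nat.add_mul]
    have : z' l - cc g l + cc g l = z' l := by omega
    rw [this, hnu]
  have hstep2 : Step g z' z'₁ := by
    refine ⟨l, pureF l (z' l - cc g l), v, hvspec.1, hvspec.2, ?_, rfl⟩
    conv_lhs => rw [hz'eq]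
    funext k
    by_cases hk : k = l
    · subst hk
      simp only [Pi.add_apply, pureF_same]
      omega
    · simp only [Pi.add_apply, pureF_other hk]
  by_cases hsh2 : ∃ k, 0 < z₁ k ∧ 0 < z'₁ k
  · obtain ⟨k, hk1, hk2⟩ := hsh2
    exact Relation.ReflTransGen.head (Or.inl hstep1)
      ((help g hpos IH hz₁ hz'₁ hk1 hk2).trans
        (Relation.ReflTransGen.single (Or.inr hstep2)))
  push_neg at hsh2
  have hz'₁j : z'₁ j = 0 := by have := hsh2 j hz₁j; omega
  have hvj : v j = 0 := by
    have h := happ₂ j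
    rw [pureF_other (Ne.symm hlj)] at h
    omega
  have hk₂i : k₂ = i := by
    rcases hall k₂ with hk | hk | hk
    · exact hk
    · exfalso; rw [hk] at hvk₂; omega
    · exact absurd hk hk₂l
  rw [hk₂i] at hvk₂
  have hz'₁i : 0 < z'₁ i := by
    have h := happ₂ i
    rw [pureF_other (Ne.symm hli)] at h
    omega
  have hz₁i : z₁ i = 0 := by
    by_contra hne
    have := hsh2 i (by omega)
    omega
  have htc : t = c := by
    have h := happ₁ i
    rw [pureF_same, hwspec.2] at h
    omega
  have hz₁eq : z₁ = pureF j (w j) := by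
    funext k
    rcases hall k with hk | hk | hk <;> rw [hk]
    · rw [pureF_other (Ne.symm hji)]
      exact hz₁i
    · have h := happ₁ j
      rw [pureF_other hji] at h
      rw [pureF_same]
      omega
    · rw [pureF_other hlj]
      exact hz₁l
  rcases Nat.eq_zero_or_pos (z' l - cc g l) with hul | hul
  · -- z'₁ is pure at i and must equal the original pure factorization
    have hz'₁eq : z'₁ = pureF i (v i) := by
      funext k
      rcases hall k with hk | hk | hk <;> rw [hk]
      · have h := happ₂ i
        rw [pureF_other (Ne.symm hli)] at h
        rw [pureF_same]
        omega
      · rw [pureF_other hji]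
        exact hz'₁j
      · have h := happ₂ l
        rw [pureF_same] at h
        have h2 := hvspec.2
        rw [pureF_other hli]
        omega
    have hvi : v i = t := by
      have hwt : v i * g i = n := by
        rw [← weight_pureF g i (v i), ← hz'₁eq]
        exact hz'₁
      exact Nat.eq_of_mul_eq_mul_right hgi (hwt.trans hnt.symm)
    have hst : Step g z' (pureF i t) := by
      rw [← hvi, ← hz'₁eq]
      exact hstep2
    exact Relation.ReflTransGen.single (Or.inr hst)
  · -- z'₁ has positive i and l coordinates; trade once more from z₁
    have hz'₁l : 0 < z'₁ l := by
      have h := happ₂ l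
      rw [pureF_same] at h
      omega
    have hnwj : w j * g j = n := by
      rw [← weight_pureF g j (w j), ← hz₁eq]
      exact hz₁
    have hcj : cc g j ≤ w j := Nat.sInf_le ⟨hwj, z', by rw [mem_facs] at hz'; omega, hz'j⟩
    have hv'spec := wch_spec g hpos j
    obtain ⟨k₃, hk₃j, hv'k₃⟩ := wch_pos_coord g hpos j
    set v' := wch g j with hv'
    set z₂ : Fin 3 → ℕ := pureF j (w j - cc g j) + v' with hz₂def
    have happ₃ : ∀ k, z₂ k = pureF j (w j - cc g j) k + v' k := fun k => rfl
    have hz₂ : z₂ ∈ facs g n := by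
      rw [mem_facs, hz₂def, sum_add_weights, weight_pureF, hv'spec.1, ← Nat.add_mul]
      have : w j - cc g j + cc g j = w j := by omega
      rw [this, hnwj]
    have hstep3 : Step g z₁ z₂ := by
      refine ⟨j, pureF j (w j - cc g j), v', hv'spec.1, hv'spec.2, ?_, rfl⟩
      conv_lhs => rw [hz₁eq]
      funext k
      by_cases hk : k = j
      · subst hk
        simp only [Pi.add_apply, pureF_same]
        omega
      · simp only [Pi.add_apply, pureF_other hk]
    have hz₂k₃ : 0 < z₂ k₃ := by
      have h := happ₃ k₃
      omega
    have hz'₁k₃ : 0 < z'₁ k₃ := by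
      rcases hall k₃ with hk | hk | hk <;> rw [hk]
      · exact hz'₁i
      · exact absurd hk hk₃j
      · exact hz'₁l
    exact Relation.ReflTransGen.head (Or.inl hstep1)
      (Relation.ReflTransGen.head (Or.inl hstep3)
        ((help g hpos IH hz₂ hz'₁ hz₂k₃ hz'₁k₃).trans
          (Relation.ReflTransGen.single (Or.inr hstep2))))

lemma chain_all (hpos : ∀ i, 0 < g i) :
    ∀ n (z z' : Fin 3 → ℕ), z ∈ facs g n → z' ∈ facs g n → Chain g z z' := by
  intro n
  induction n using Nat.strong_induction_on with
  | _ n IH =>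
  intro z z' hz hz'
  by_cases hzz : z = z'
  · rw [hzz]
    exact Relation.ReflTransGen.refl
  by_cases hsh : ∃ k, 0 < z k ∧ 0 < z' k
  · obtain ⟨k, h1, h2⟩ := hsh
    exact help g hpos IH hz hz' h1 h2
  push_neg at hsh
  rcases Nat.eq_zero_or_pos n with rfl | hn
  · exact absurd (by rw [facs_zero_coords g hpos hz, facs_zero_coords g hpos hz']) hzz
  have hzpos : ∃ i, 0 < z i := by
    by_contra h
    push_neg at h
    have hz0 : z = 0 := by funext k; have := h k; simp only [Pi.zero_apply]; omega
    rw [mem_facs, hz0] at hz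
    simp only [Pi.zero_apply, zero_mul, Finset.sum_const_zero] at hz
    omega
  obtain ⟨i, hi⟩ := hzpos
  have hz'i : z' i = 0 := by have := hsh i hi; omega
  by_cases h2 : ∃ j, j ≠ i ∧ 0 < z j
  · obtain ⟨j, hji, hj⟩ := h2
    have hz'j : z' j = 0 := by have := hsh j hj; omega
    obtain ⟨l, hli, hlj, hall⟩ := third i j (Ne.symm hji)
    have hz'eq : z' = pureF l (z' l) := by
      funext k
      rcases hall k with hk | hk | hk <;> rw [hk]
      · rw [hz'i, pureF_other (Ne.symm hli)]
      · rw [hz'j, pureF_other (Ne.symm hlj)]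
      · rw [pureF_same]
    have hul : 0 < z' l := by
      rcases Nat.eq_zero_or_pos (z' l) with h0 | h
      · exfalso
        rw [mem_facs, hz'eq, weight_pureF, h0, zero_mul] at hz'
        omega
      · exact h
    have hzl : z l = 0 := by
      by_contra hne
      have := hsh l (by omega)
      omega
    have hd := disj g hpos IH hul (hz'eq ▸ hz') hz hzl
    rw [hz'eq]
    exact chain_symm g hd
  · push_neg at h2
    have hzeq : z = pureF i (z i) := by
      funext k
      by_cases hk : k = i
      · subst hk; rw [pureF_same]
      · rw [pureF_other hk]
        have := h2 k hk
        omega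
    have hd := disj g hpos IH hi (hzeq ▸ hz) hz' hz'i
    rw [hzeq]
    exact hd

lemma chain_facs {n : ℕ} {z u : Fin 3 → ℕ} (hz : z ∈ facs g n) (h : Chain g z u) :
    u ∈ facs g n := by
  rw [mem_facs] at hz ⊢
  rw [← chain_weight g h]
  exact hz

lemma adj_symm {n : ℕ} {u v : Fin 3 → ℕ} (h : adj g n u v) : adj g n v u := by
  obtain ⟨h1, h2, k, hk1, hk2⟩ := h
  exact ⟨h2, h1, k, hk2, hk1⟩

lemma step_adj {n : ℕ} (hn : ∀ i, n ≠ cc g i * g i) {u v : Fin 3 → ℕ}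
    (hu : u ∈ facs g n) (hv : v ∈ facs g n) (h : Step g u v) : adj g n u v := by
  obtain ⟨t, z₀, w, hw, hwt, hueq, hveq⟩ := h
  by_cases hz₀ : ∃ k, 0 < z₀ k
  · obtain ⟨k, hk⟩ := hz₀
    refine ⟨hu, hv, k, ?_, ?_⟩
    · rw [hueq]; simp only [Pi.add_apply]; omega
    · rw [hveq]; simp only [Pi.add_apply]; omega
  · exfalso
    push_neg at hz₀
    have hz0 : z₀ = 0 := by funext k; have := hz₀ k; simp only [Pi.zero_apply]; omega
    rw [hz0, zero_add] at hueq
    apply hn t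
    rw [mem_facs, hueq, weight_pureF] at hu
    omega

lemma betti_classify (hpos : ∀ i, 0 < g i) {n : ℕ} (hb : IsBetti g n) :
    ∃ i, n = cc g i * g i := by
  by_contra hcon
  push_neg at hcon
  obtain ⟨z, hz, z', hz', hnc⟩ := hb
  apply hnc
  have hch := chain_all g hpos n z z' hz hz'
  have key : ∀ u, Chain g z u → Relation.ReflTransGen (adj g n) z u := by
    intro u hchain
    induction hchain with
    | refl => exact Relation.ReflTransGen.refl
    | tail h1 h2 ih =>
      rename_i x y
      have hx : x ∈ facs g n := chain_facs g hz h1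
      have hy : y ∈ facs g n := by
        rw [mem_facs] at hx ⊢
        rw [← sym_weight g h2]
        exact hx
      refine Relation.ReflTransGen.tail ih ?_
      rcases h2 with h2 | h2
      · exact step_adj g hcon hx hy h2
      · exact adj_symm g (step_adj g hcon hy hx h2)
  exact key z' hch

lemma b_distinct (hpos : ∀ i, 0 < g i) (hbetti : {n : ℕ | IsBetti g n}.ncard = 3) :
    ∀ i j : Fin 3, i ≠ j → cc g i * g i ≠ cc g j * g j := by
  intro i j hij heq
  obtain ⟨l, hli, hlj, hall⟩ := third i j hij
  have hsub : {n : ℕ | IsBetti g n} ⊆ {cc g i * g i, cc g l * g l} := by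
    intro n hn
    obtain ⟨k, rfl⟩ := betti_classify g hpos hn
    rcases hall k with hk | hk | hk <;> rw [hk]
    · exact Set.mem_insert _ _
    · rw [← heq]; exact Set.mem_insert _ _
    · exact Set.mem_insert_of_mem _ rfl
  have hfin : ({cc g i * g i, cc g l * g l} : Set ℕ).Finite :=
    (Set.finite_singleton _).insert _
  have h2 : ({cc g i * g i, cc g l * g l} : Set ℕ).ncard ≤ 2 := by
    refine le_trans (Set.ncard_insert_le _ _) ?_
    rw [Set.ncard_singleton]
  have := Set.ncard_le_ncard hsub hfin
  omega

lemma third' (i : Fin 3) :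
    ∃ j l, j ≠ i ∧ l ≠ i ∧ l ≠ j ∧ ∀ k, k = i ∨ k = j ∨ k = l := by
  fin_cases i
  · exact ⟨1, 2, by decide, by decide, by decide, by decide⟩
  · exact ⟨0, 2, by decide, by decide, by decide, by decide⟩
  · exact ⟨0, 1, by decide, by decide, by decide, by decide⟩

lemma no_two (hpos : ∀ i, 0 < g i)
    (hdist : ∀ i j : Fin 3, i ≠ j → cc g i * g i ≠ cc g j * g j)
    {i j l : Fin 3} (hji : j ≠ i) (hli : l ≠ i) (hlj : l ≠ j)
    (hall : ∀ k, k = i ∨ k = j ∨ k = l) {w w' : Fin 3 → ℕ}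
    (hw : w ∈ facs g (cc g i * g i)) (hwi : w i = 0)
    (hw' : w' ∈ facs g (cc g i * g i)) (hw'i : w' i = 0)
    (hgt : w' j < w j) : False := by
  have hij : i ≠ j := Ne.symm hji
  have hil : i ≠ l := Ne.symm hli
  have hjl : j ≠ l := Ne.symm hlj
  have hwt : w j * g j + w l * g l = cc g i * g i := by
    have := mem_facs g |>.mp hw
    rw [sum3 _ hij hil hjl hall, hwi, zero_mul, zero_add] at this
    exact this
  have hw't : w' j * g j + w' l * g l = cc g i * g i := by
    have := mem_facs g |>.mp hw'
    rw [sum3 _ hij hil hjl hall, hw'i, zero_mul, zero_add] at this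
    exact this
  set a := w j with ha
  set b := w l with hb
  set a' := w' j with ha'
  set b' := w' l with hb'
  set d := Nat.gcd (g j) (g l) with hd
  have hdpos : 0 < d := Nat.gcd_pos_of_pos_left _ (hpos j)
  set q := g j / d with hqdef
  set p := g l / d with hpdef
  have hq : q * d = g j := Nat.div_mul_cancel (Nat.gcd_dvd_left _ _)
  have hp : p * d = g l := Nat.div_mul_cancel (Nat.gcd_dvd_right _ _)
  have hqpos : 0 < q := by
    rcases Nat.eq_zero_or_pos q with h0 | h
    · rw [h0, zero_mul] at hq; have := hpos j; omega
    · exact h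
  have hppos : 0 < p := by
    rcases Nat.eq_zero_or_pos p with h0 | h
    · rw [h0, zero_mul] at hp; have := hpos l; omega
    · exact h
  have hco : Nat.Coprime q p := Nat.coprime_div_gcd_div_gcd hdpos
  -- the key balance equation over q, p
  have hbal : a * q + b * p = a' * q + b' * p := by
    have e : a * g j + b * g l = a' * g j + b' * g l := by omega
    rw [← hq, ← hp, ← mul_assoc, ← mul_assoc, ← mul_assoc, ← mul_assoc,
      ← Nat.add_mul, ← Nat.add_mul] at e
    exact Nat.eq_of_mul_eq_mul_right hdpos e
  have haq : a' * q < a * q := Nat.mul_lt_mul_of_lt_of_le hgt (le_refl q) hqpos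
  have hbb : b < b' := by
    have hbp : b * p < b' * p := by omega
    exact Nat.lt_of_mul_lt_mul_right hbp
  have hsub : (a - a') * q = (b' - b) * p := by
    rw [Nat.sub_mul, Nat.sub_mul]
    omega
  have hpdvd : p ∣ (a - a') := by
    have h1 : p ∣ (a - a') * q := ⟨b' - b, by rw [hsub]; ring⟩
    exact (Nat.Coprime.dvd_of_dvd_mul_right hco.symm h1)
  have hpa : p ≤ a - a' := Nat.le_of_dvd (by omega) hpdvd
  have hqb : q ≤ b' - b := by
    obtain ⟨m, hm⟩ := hpdvd
    have hm1 : 1 ≤ m := by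
      rcases Nat.eq_zero_or_pos m with h0 | h
      · rw [h0, mul_zero] at hm; omega
      · exact h
    have : (m * q) * p = (b' - b) * p := by rw [← hsub, hm]; ring
    have h2 : m * q = b' - b := Nat.eq_of_mul_eq_mul_right hppos this
    have : q ≤ m * q := Nat.le_mul_of_pos_left q hm1
    omega
  -- minimality of binary relations
  have hbinj : ∀ T Y : ℕ, T * g j = Y * g l → p ∣ T := by
    intro T Y h
    rw [← hq, ← hp, ← mul_assoc, ← mul_assoc] at h
    have h2 : T * q = Y * p := Nat.eq_of_mul_eq_mul_right hdpos h
    exact Nat.Coprime.dvd_of_dvd_mul_right hco.symm ⟨Y, by rw [h2]; ring⟩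
  have hbinl : ∀ T Y : ℕ, T * g l = Y * g j → q ∣ T := by
    intro T Y h
    rw [← hq, ← hp, ← mul_assoc, ← mul_assoc] at h
    have h2 : T * p = Y * q := Nat.eq_of_mul_eq_mul_right hdpos h
    exact Nat.Coprime.dvd_of_dvd_mul_right hco ⟨Y, by rw [h2]; ring⟩
  have hpq : p * g j = q * g l := by rw [← hq, ← hp]; ring
  have hcjp : cc g j ≤ p :=
    Nat.sInf_le ⟨hppos, pureF l q, by rw [weight_pureF]; omega, pureF_other hjl q⟩
  obtain ⟨hv1, hv2⟩ := wch_spec g hpos j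
  rcases Nat.eq_zero_or_pos (wch g j i) with hvi | hvi
  · -- chosen trade for j is binary: `cc g j = p`
    have hvl : cc g j * g j = wch g j l * g l := by
      rw [sum3 _ hij hil hjl hall, hvi, hv2, zero_mul, zero_mul] at hv1
      omega
    have hpdvdc : p ∣ cc g j := hbinj _ _ hvl
    have hcj : cc g j = p :=
      le_antisymm hcjp (Nat.le_of_dvd (cc_pos g hpos j) hpdvdc)
    -- now work on the l side
    have hclq : cc g l ≤ q :=
      Nat.sInf_le ⟨hqpos, pureF j p, by rw [weight_pureF]; omega, pureF_other (Ne.symm hjl) p⟩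
    obtain ⟨hu1, hu2⟩ := wch_spec g hpos l
    rcases Nat.eq_zero_or_pos (wch g l i) with hui | hui
    · -- also binary: then the two binary Betti elements coincide
      have hul : cc g l * g l = wch g l j * g j := by
        rw [sum3 _ hij hil hjl hall, hui, hu2, zero_mul, zero_mul] at hu1
        omega
      have hqdvdc : q ∣ cc g l := hbinl _ _ hul
      have hcl : cc g l = q :=
        le_antisymm hclq (Nat.le_of_dvd (cc_pos g hpos l) hqdvdc)
      apply hdist j l (Ne.symm hlj)
      rw [hcj, hcl]
      omega
    · -- trade for l uses i; build a factorization of `cc g i * g i` with positive i coord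
      have hclb' : cc g l ≤ b' := by omega
      set u' : Fin 3 → ℕ := fun k => w' k - pureF l (cc g l) k + wch g l k with hu'def
      have hu'i : u' i = wch g l i := by
        have : u' i = w' i - pureF l (cc g l) i + wch g l i := rfl
        rw [pureF_other hil, hw'i] at this
        omega
      have hu'j : u' j = a' + wch g l j := by
        have : u' j = w' j - pureF l (cc g l) j + wch g l j := rfl
        rw [pureF_other (Ne.symm hlj)] at this
        omega
      have hu'l : u' l = b' - cc g l := by
        have : u' l = w' l - pureF l (cc g l) l + wch g l l := rfl
        rw [pureF_same, hu2] at this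
        omega
      have hu'w : u' ∈ facs g (cc g i * g i) := by
        rw [mem_facs, sum3 _ hij hil hjl hall, hu'i, hu'j, hu'l]
        have e1 : (a' + wch g l j) * g j = a' * g j + wch g l j * g j := by ring
        have e2 : (b' - cc g l) * g l = b' * g l - cc g l * g l := Nat.sub_mul _ _ _
        have e3 : cc g l * g l ≤ b' * g l := Nat.mul_le_mul_right _ hclb'
        have e4 : wch g l i * g i + wch g l j * g j = cc g l * g l := by
          rw [sum3 _ hij hil hjl hall, hu2, zero_mul] at hu1
          omega
        omega
      have hu'pure : u' = pureF i (cc g i) := eq_pure_of_pos g hpos hu'w (by omega)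
      have hj0 : a' + wch g l j = 0 := by
        rw [← hu'j, hu'pure, pureF_other hji]
      have hl0 : b' - cc g l = 0 := by
        rw [← hu'l, hu'pure, pureF_other hli]
      -- so a' = 0, b' = cc g l, and q ≤ b' - b forces b = 0 and b' = q
      have hb'q : b' = cc g l := by omega
      have hclq' : cc g l = q := by omega
      apply hdist i l hil
      have hn : cc g i * g i = b' * g l := by
        rw [← hw't]
        have : a' = 0 := by omega
        rw [this, zero_mul, zero_add]
      rw [hn, hb'q]
  · -- trade for j uses i; build a factorization of `cc g i * g i` with positive i coord
    have hcja : cc g j ≤ a := by omega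
    set u : Fin 3 → ℕ := fun k => w k - pureF j (cc g j) k + wch g j k with hudef
    have hui : u i = wch g j i := by
      have : u i = w i - pureF j (cc g j) i + wch g j i := rfl
      rw [pureF_other hij, hwi] at this
      omega
    have huj : u j = a - cc g j := by
      have : u j = w j - pureF j (cc g j) j + wch g j j := rfl
      rw [pureF_same, hv2] at this
      omega
    have hul : u l = b + wch g j l := by
      have : u l = w l - pureF j (cc g j) l + wch g j l := rfl
      rw [pureF_other hlj] at this
      omega
    have huw : u ∈ facs g (cc g i * g i) := by
      rw [mem_facs, sum3 _ hij hil hjl hall, hui, huj, hul]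
      have e1 : (b + wch g j l) * g l = b * g l + wch g j l * g l := by ring
      have e2 : (a - cc g j) * g j = a * g j - cc g j * g j := Nat.sub_mul _ _ _
      have e3 : cc g j * g j ≤ a * g j := Nat.mul_le_mul_right _ hcja
      have e4 : wch g j i * g i + wch g j l * g l = cc g j * g j := by
        rw [sum3 _ hij hil hjl hall, hv2, zero_mul] at hv1
        omega
      omega
    have hupure : u = pureF i (cc g i) := eq_pure_of_pos g hpos huw (by omega)
    have hj0 : a - cc g j = 0 := by
      rw [← huj, hupure, pureF_other hji]
    have hl0 : b + wch g j l = 0 := by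
      rw [← hul, hupure, pureF_other hli]
    apply hdist i j hij
    have hn : cc g i * g i = a * g j := by
      rw [← hwt]
      have : b = 0 := by omega
      rw [this, zero_mul]
      omega
    have : a = cc g j := by omega
    rw [hn, this]

lemma wch_unique (hpos : ∀ i, 0 < g i)
    (hdist : ∀ i j : Fin 3, i ≠ j → cc g i * g i ≠ cc g j * g j)
    {i : Fin 3} {w w' : Fin 3 → ℕ}
    (hw : w ∈ facs g (cc g i * g i)) (hwi : w i = 0)
    (hw' : w' ∈ facs g (cc g i * g i)) (hw'i : w' i = 0) : w = w' := by
  obtain ⟨j, l, hji, hli, hlj, hall⟩ := third' i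
  rcases lt_trichotomy (w j) (w' j) with hlt | heq | hlt
  · exact (no_two g hpos hdist hji hli hlj hall hw' hw'i hw hwi hlt).elim
  · -- equal j coordinates force equal l coordinates
    have hwt : w j * g j + w l * g l = cc g i * g i := by
      have h := mem_facs g |>.mp hw
      rw [sum3 _ (Ne.symm hji) (Ne.symm hli) (Ne.symm hlj) hall, hwi, zero_mul,
        zero_add] at h
      exact h
    have hw't : w' j * g j + w' l * g l = cc g i * g i := by
      have h := mem_facs g |>.mp hw'
      rw [sum3 _ (Ne.symm hji) (Ne.symm hli) (Ne.symm hlj) hall, hw'i, zero_mul,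
        zero_add] at h
      exact h
    have hjj : w j * g j = w' j * g j := by rw [heq]
    have hll : w l * g l = w' l * g l := by omega
    have hleq : w l = w' l := Nat.eq_of_mul_eq_mul_right (hpos l) hll
    funext k
    rcases hall k with hk | hk | hk <;> rw [hk]
    · rw [hwi, hw'i]
    · exact heq
    · exact hleq
  · exact (no_two g hpos hdist hji hli hlj hall hw hwi hw' hw'i hlt).elim

lemma facs_b (hpos : ∀ i, 0 < g i)
    (hdist : ∀ i j : Fin 3, i ≠ j → cc g i * g i ≠ cc g j * g j) (i : Fin 3) :
    facs g (cc g i * g i) = {pureF i (cc g i), wch g i} := by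
  ext u
  constructor
  · intro hu
    rcases Nat.eq_zero_or_pos (u i) with h0 | hp
    · right
      exact wch_unique g hpos hdist hu h0 (wch_facs g hpos i) (wch_zero g hpos i)
    · left
      exact eq_pure_of_pos g hpos hu hp
  · rintro (rfl | rfl)
    · exact weight_pureF g i (cc g i)
    · exact wch_facs g hpos i

lemma lengthSet_b (hpos : ∀ i, 0 < g i)
    (hdist : ∀ i j : Fin 3, i ≠ j → cc g i * g i ≠ cc g j * g j) (i : Fin 3) :
    lengthSet g (cc g i * g i) = {cc g i, ∑ k, wch g i k} := by
  rw [lengthSet, facs_b g hpos hdist i, Set.image_pair, length_pureF]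

/-- The length gap of the `i`-th Betti element. -/
noncomputable def Del (i : Fin 3) : ℕ :=
  (cc g i ⊔ ∑ k, wch g i k) - (cc g i ⊓ ∑ k, wch g i k)

/-- The maximal Betti length gap. -/
noncomputable def DD : ℕ := Del g 0 ⊔ (Del g 1 ⊔ Del g 2)

lemma Del_le_DD (t : Fin 3) : Del g t ≤ DD g := by
  have h0 : DD g = Del g 0 ⊔ (Del g 1 ⊔ Del g 2) := rfl
  fin_cases t
  · show Del g 0 ≤ DD g; omega
  · show Del g 1 ≤ DD g; omega
  · show Del g 2 ≤ DD g; omega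

lemma sum_add_lengths (a b : Fin 3 → ℕ) :
    ∑ k, (a + b) k = (∑ k, a k) + ∑ k, b k := by
  rw [← Finset.sum_add_distrib]
  apply Finset.sum_congr rfl
  intro k _
  simp

lemma step_length (hpos : ∀ i, 0 < g i)
    (hdist : ∀ i j : Fin 3, i ≠ j → cc g i * g i ≠ cc g j * g j)
    {u v : Fin 3 → ℕ} (h : Step g u v) :
    (∑ k, u k) ≤ (∑ k, v k) + DD g ∧ (∑ k, v k) ≤ (∑ k, u k) + DD g := by
  obtain ⟨t, z₀, w, hw, hwt, hueq, hveq⟩ := h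
  have hwu : w = wch g t :=
    wch_unique g hpos hdist hw hwt (wch_facs g hpos t) (wch_zero g hpos t)
  have hsu : ∑ k, u k = (∑ k, z₀ k) + cc g t := by
    rw [hueq, sum_add_lengths, length_pureF]
  have hsv : ∑ k, v k = (∑ k, z₀ k) + ∑ k, wch g t k := by
    rw [hveq, sum_add_lengths, hwu]
  have hdel : Del g t = (cc g t ⊔ ∑ k, wch g t k) - (cc g t ⊓ ∑ k, wch g t k) := rfl
  have hDle := Del_le_DD g t
  omega

lemma sym_length (hpos : ∀ i, 0 < g i)
    (hdist : ∀ i j : Fin 3, i ≠ j → cc g i * g i ≠ cc g j * g j)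
    {u v : Fin 3 → ℕ} (h : Sym g u v) :
    (∑ k, u k) ≤ (∑ k, v k) + DD g ∧ (∑ k, v k) ≤ (∑ k, u k) + DD g := by
  rcases h with h | h
  · exact step_length g hpos hdist h
  · exact (step_length g hpos hdist h).symm

lemma mem_lengthSet {n m : ℕ} : m ∈ lengthSet g n ↔ ∃ z ∈ facs g n, ∑ k, z k = m :=
  Iff.rfl

lemma gap_le (hpos : ∀ i, 0 < g i)
    (hdist : ∀ i j : Fin 3, i ≠ j → cc g i * g i ≠ cc g j * g j)
    {n d : ℕ} (hd : d ∈ delta g n) : d ≤ DD g := by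
  obtain ⟨a, ha, b, hb, hab, hcons, rfl⟩ := hd
  obtain ⟨za, hza, hzaa⟩ := ha
  obtain ⟨zb, hzb, hzbb⟩ := hb
  simp only at hzaa hzbb
  have hch := chain_all g hpos n za zb hza hzb
  have key : ∀ u, Chain g za u → b ≤ ∑ k, u k → b - a ≤ DD g := by
    intro u hchain
    induction hchain with
    | refl =>
      intro hbu
      omega
    | tail h1 h2 ih =>
      rename_i x y
      intro hbu
      rcases le_or_gt (∑ k, x k) a with hxa | hxa
      · have := sym_length g hpos hdist h2
        omega
      · have hxL : (∑ k, x k) ∈ lengthSet g n := ⟨x, chain_facs g hza h1, rfl⟩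
        have hnc := hcons _ hxL
        have hxb : b ≤ ∑ k, x k := by omega
        exact ih hxb
  exact key zb hch (by omega)

lemma facs_finite (hpos : ∀ i, 0 < g i) (n : ℕ) : (facs g n).Finite := by
  apply Set.Finite.subset
    (Set.Finite.pi (fun _ : Fin 3 => Set.finite_Iic n))
  intro z hz
  intro k _
  simp only [Set.mem_Iic]
  have h1 := coord_le g hz k
  have h2 : z k ≤ z k * g k := Nat.le_mul_of_pos_right _ (hpos k)
  omega

lemma lengthSet_finite (hpos : ∀ i, 0 < g i) (n : ℕ) : (lengthSet g n).Finite :=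
  (facs_finite g hpos n).image _

lemma delta_sub_Delta (n : ℕ) : delta g n ⊆ Delta g := fun d hd =>
  Set.mem_iUnion.mpr ⟨n, hd⟩

end Gen

lemma deltaOf_pos {L : Set ℕ} {d : ℕ} (hd : d ∈ deltaOf L) : 0 < d := by
  obtain ⟨a, _, b, _, hab, _, rfl⟩ := hd
  omega

lemma deltaOf_nonempty_of_lt {L : Set ℕ} {x y : ℕ} (hx : x ∈ L) (hy : y ∈ L)
    (hxy : x < y) : (deltaOf L).Nonempty := by
  have hTne : {m : ℕ | m ∈ L ∧ x < m}.Nonempty := ⟨y, hy, hxy⟩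
  have hmem := Nat.sInf_mem hTne
  refine ⟨sInf {m : ℕ | m ∈ L ∧ x < m} - x, x, hx, sInf {m : ℕ | m ∈ L ∧ x < m},
    hmem.1, hmem.2, ?_, rfl⟩
  intro c hc hcon
  have hcmem : c ∈ {m : ℕ | m ∈ L ∧ x < m} := ⟨hc, hcon.1⟩
  have := Nat.sInf_le hcmem
  omega

lemma deltaOf_pair {x y : ℕ} (h : x < y) : deltaOf {x, y} = {y - x} := by
  ext d
  constructor
  · rintro ⟨a, ha, b, hb, hab, hcons, rfl⟩
    rcases ha with rfl | ha
    · rcases hb with hb | hb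
      · omega
      · rw [Set.mem_singleton_iff] at hb
        rw [hb]
        exact Set.mem_singleton _
    · rw [Set.mem_singleton_iff] at ha
      rcases hb with rfl | hb
      · omega
      · rw [Set.mem_singleton_iff] at hb
        omega
  · rw [Set.mem_singleton_iff]
    rintro rfl
    refine ⟨x, Set.mem_insert _ _, y, Set.mem_insert_of_mem _ rfl, h, ?_, rfl⟩
    rintro c (rfl | hc)
    · omega
    · rw [Set.mem_singleton_iff] at hc
      omega

lemma span_le (D : ℕ) : ∀ (N : ℕ) (L : Set ℕ), L.ncard = N → L.Finite → L.Nonempty →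
    (∀ d ∈ deltaOf L, d ≤ D) → sSup L - sInf L ≤ (N - 1) * D := by
  intro N
  induction N using Nat.strong_induction_on with
  | _ N IH =>
  intro L hN hfin hne hgap
  rcases le_or_gt N 1 with hN1 | hN1
  · -- L is a singleton
    have hN0 : L.ncard ≠ 0 := by
      intro h0
      rw [Set.ncard_eq_zero hfin] at h0
      rw [h0] at hne
      exact Set.not_nonempty_empty hne
    have hN' : L.ncard = 1 := by omega
    obtain ⟨x, rfl⟩ := Set.ncard_eq_one.mp hN'
    rw [csSup_singleton, csInf_singleton]
    omega
  · have hbdd : BddAbove L := hfin.bddAbove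
    have hM : sSup L ∈ L := Nat.sSup_mem hne hbdd
    set L' := L \ {sSup L} with hL'
    have hfin' : L'.Finite := hfin.subset Set.diff_subset
    have hN' : L'.ncard = N - 1 := by
      rw [hL', Set.ncard_diff_singleton_of_mem hM, hN]
    have hne' : L'.Nonempty := by
      apply Set.nonempty_of_ncard_ne_zero
      omega
    have hM' : sSup L' ∈ L' := Nat.sSup_mem hne' hfin'.bddAbove
    have hM'L : sSup L' ∈ L := hM'.1
    have hM'ne : sSup L' ≠ sSup L := hM'.2
    have hM'lt : sSup L' < sSup L := by
      have := le_csSup hbdd hM'L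
      omega
    have hdmem : sSup L - sSup L' ∈ deltaOf L := by
      refine ⟨sSup L', hM'L, sSup L, hM, hM'lt, ?_, rfl⟩
      intro c hc hcon
      have hcne : c ≠ sSup L := by omega
      have hcL' : c ∈ L' := ⟨hc, hcne⟩
      have := le_csSup hfin'.bddAbove hcL'
      omega
    have hgapM : sSup L - sSup L' ≤ D := hgap _ hdmem
    have hInfL : sInf L ∈ L := Nat.sInf_mem hne
    have hInfLlt : sInf L < sSup L := by
      obtain ⟨y, hy⟩ := hne'
      have h1 : sInf L ≤ y := Nat.sInf_le hy.1
      have h2 : y ≤ sSup L' := le_csSup hfin'.bddAbove hy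
      omega
    have hInfL' : sInf L ∈ L' := ⟨hInfL, by simp only [Set.mem_singleton_iff]; omega⟩
    have hInfeq : sInf L' = sInf L :=
      le_antisymm (Nat.sInf_le hInfL') (Nat.sInf_le (Nat.sInf_mem hne').1)
    have hgap' : ∀ d ∈ deltaOf L', d ≤ D := by
      rintro d ⟨a, ha, b, hb, hab, hcons, rfl⟩
      apply hgap
      refine ⟨a, ha.1, b, hb.1, hab, ?_, rfl⟩
      intro c hc hcon
      have hble : b ≤ sSup L' := le_csSup hfin'.bddAbove hb
      have hcne : c ≠ sSup L := by omega
      exact hcons c ⟨hc, hcne⟩ hcon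
    have hIH := IH (N - 1) (by omega) L' hN' hfin' hne' hgap'
    have hinfle : sInf L ≤ sSup L' := Nat.sInf_le hM'L
    rw [hInfeq] at hIH
    set X := (N - 1 - 1) * D with hX
    set Y := (N - 1) * D with hY
    have hfinal : sSup L - sInf L ≤ D + X := by omega
    have heq2 : D + X = Y := by
      rw [hX, hY]
      obtain ⟨m, hm⟩ : ∃ m, N - 1 = m + 1 := ⟨N - 2, by omega⟩
      rw [hm]
      have h3 : m + 1 - 1 = m := by omega
      rw [h3]
      ring
    omega


theorem stmt8 (g : Fin 3 → ℕ) (hpos : ∀ i, 0 < g i)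
    (hgcd : Finset.univ.gcd g = 1) (hmin : IsMinGen g)
    (hbetti : {n : ℕ | IsBetti g n}.ncard = 3) :
    Bland g := by
  classical
  have hdist := b_distinct g hpos hbetti
  have hΔsub : ∀ d ∈ Delta g, d ≤ DD g := by
    intro d hd
    obtain ⟨n, hdn⟩ := Set.mem_iUnion.mp hd
    exact gap_le g hpos hdist hdn
  have hbddΔ : BddAbove (Delta g) := ⟨DD g, fun d hd => hΔsub d hd⟩
  have hg01 : g 0 ≠ g 1 := by
    intro h
    exact hmin 0 ⟨pureF 1 1, pureF_other (by decide) 1,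
      by rw [weight_pureF, one_mul, ← h]⟩
  have h1L : g 1 ∈ lengthSet g (g 1 * g 0) :=
    ⟨pureF 0 (g 1), weight_pureF g 0 (g 1), length_pureF 0 (g 1)⟩
  have h0L : g 0 ∈ lengthSet g (g 1 * g 0) :=
    ⟨pureF 1 (g 0), by rw [mem_facs, weight_pureF]; ring, length_pureF 1 (g 0)⟩
  have hΔne : (Delta g).Nonempty := by
    rcases Ne.lt_or_gt hg01 with h | h
    · obtain ⟨d, hd⟩ := deltaOf_nonempty_of_lt h0L h1L h
      exact ⟨d, delta_sub_Delta g _ hd⟩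
    · obtain ⟨d, hd⟩ := deltaOf_nonempty_of_lt h1L h0L h
      exact ⟨d, delta_sub_Delta g _ hd⟩
  have hΔpos : ∀ d ∈ Delta g, 0 < d := by
    intro d hd
    obtain ⟨n, hdn⟩ := Set.mem_iUnion.mp hd
    exact deltaOf_pos hdn
  have hsupmem : sSup (Delta g) ∈ Delta g := Nat.sSup_mem hΔne hbddΔ
  have hDpos : 0 < sSup (Delta g) := hΔpos _ hsupmem
  have hsup_le : sSup (Delta g) ≤ DD g := csSup_le hΔne hΔsub
  have hDDdef : DD g = Del g 0 ⊔ (Del g 1 ⊔ Del g 2) := rfl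
  have hex : ∃ t, Del g t = DD g := by
    rw [hDDdef]
    rcases max_choice (Del g 0) (Del g 1 ⊔ Del g 2) with h2 | h2
    · exact ⟨0, h2.symm⟩
    · rw [h2]
      rcases max_choice (Del g 1) (Del g 2) with h | h
      · exact ⟨1, h.symm⟩
      · exact ⟨2, h.symm⟩
  obtain ⟨t0, ht0⟩ := hex
  have hDelt0 : Del g t0 =
      (cc g t0 ⊔ ∑ k, wch g t0 k) - (cc g t0 ⊓ ∑ k, wch g t0 k) := rfl
  have hne0 : cc g t0 ≠ ∑ k, wch g t0 k := by
    intro h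
    have : Del g t0 = 0 := by rw [hDelt0]; omega
    omega
  have hlen0 : lengthSet g (cc g t0 * g t0) = {cc g t0, ∑ k, wch g t0 k} :=
    lengthSet_b g hpos hdist t0
  have hdelta0 : delta g (cc g t0 * g t0) = {DD g} := by
    unfold delta
    rw [hlen0]
    rcases Ne.lt_or_gt hne0 with h | h
    · rw [deltaOf_pair h]
      congr 1
      rw [← ht0, hDelt0]
      omega
    · rw [Set.pair_comm, deltaOf_pair h]
      congr 1
      rw [← ht0, hDelt0]
      omega
  have hDDmem : DD g ∈ Delta g :=
    delta_sub_Delta g _ (by rw [hdelta0]; exact Set.mem_singleton _)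
  have hDeq : sSup (Delta g) = DD g := le_antisymm hsup_le (le_csSup hbddΔ hDDmem)
  have hncard0 : (lengthSet g (cc g t0 * g t0)).ncard = 2 := by
    rw [hlen0]
    exact Set.ncard_pair hne0
  have hLD0 : LD g (cc g t0 * g t0) = 1 / (DD g : ℝ) := by
    unfold LD
    rw [hncard0, hlen0, csSup_pair, csInf_pair]
    rw [show ((2:ℕ):ℝ) - 1 = 1 by norm_num]
    congr 1
    rw [← Nat.cast_sub inf_le_sup]
    have hd1 : (cc g t0 ⊔ ∑ k, wch g t0 k) - (cc g t0 ⊓ ∑ k, wch g t0 k) = DD g := by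
      rw [← ht0, hDelt0]
    exact_mod_cast hd1
  have hlb : ∀ x ∈ {x : ℝ | ∃ n : ℕ, 2 ≤ (lengthSet g n).ncard ∧ x = LD g n},
      1 / ((sSup (Delta g) : ℕ) : ℝ) ≤ x := by
    rintro x ⟨n, h2n, rfl⟩
    have hfinL := lengthSet_finite g hpos n
    have hneL : (lengthSet g n).Nonempty := Set.nonempty_of_ncard_ne_zero (by omega)
    have hsupm : sSup (lengthSet g n) ∈ lengthSet g n :=
      Nat.sSup_mem hneL hfinL.bddAbove
    have hinfm : sInf (lengthSet g n) ∈ lengthSet g n := Nat.sInf_mem hneL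
    have hlt : sInf (lengthSet g n) < sSup (lengthSet g n) := by
      rcases eq_or_lt_of_le (Nat.sInf_le hsupm) with he | h
      · exfalso
        have hsubs : lengthSet g n ⊆ {sInf (lengthSet g n)} := by
          intro y hy
          have hy1 := Nat.sInf_le hy
          have hy2 := le_csSup hfinL.bddAbove hy
          simp only [Set.mem_singleton_iff]
          omega
        have := Set.ncard_le_ncard hsubs (Set.finite_singleton _)
        rw [Set.ncard_singleton] at this
        omega
      · exact h
    have hgaps : ∀ d ∈ deltaOf (lengthSet g n), d ≤ sSup (Delta g) := fun d hd =>
      le_csSup hbddΔ (delta_sub_Delta g n hd)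
    have hspan := span_le (sSup (Delta g)) ((lengthSet g n).ncard) (lengthSet g n)
      rfl hfinL hneL hgaps
    unfold LD
    have hD1 : (1:ℝ) ≤ ((sSup (Delta g) : ℕ) : ℝ) := by exact_mod_cast hDpos
    have hden : (0:ℝ) < ((sSup (lengthSet g n) : ℕ) : ℝ)
        - ((sInf (lengthSet g n) : ℕ) : ℝ) := by
      have : ((sInf (lengthSet g n) : ℕ) : ℝ) < ((sSup (lengthSet g n) : ℕ) : ℝ) := by
        exact_mod_cast hlt
      linarith
    rw [div_le_div_iff₀ (by linarith) hden, one_mul]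
    have hcast : ((sSup (lengthSet g n) : ℕ) : ℝ) - ((sInf (lengthSet g n) : ℕ) : ℝ)
        = ((sSup (lengthSet g n) - sInf (lengthSet g n) : ℕ) : ℝ) := by
      rw [Nat.cast_sub (le_of_lt hlt)]
    have hcast2 : (((lengthSet g n).ncard : ℝ) - 1)
        = (((lengthSet g n).ncard - 1 : ℕ) : ℝ) := by
      rw [Nat.cast_sub (by omega), Nat.cast_one]
    rw [hcast, hcast2, ← Nat.cast_mul]
    exact_mod_cast hspan
  have hmemT : 1 / ((sSup (Delta g) : ℕ) : ℝ) ∈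
      {x : ℝ | ∃ n : ℕ, 2 ≤ (lengthSet g n).ncard ∧ x = LD g n} := by
    refine ⟨cc g t0 * g t0, by rw [hncard0], ?_⟩
    rw [hLD0, hDeq]
  unfold Bland LDsgp
  exact le_antisymm (csInf_le ⟨_, fun x hx => hlb x hx⟩ hmemT)
    (le_csInf ⟨_, hmemT⟩ hlb)
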